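/- Let (A, [ , ]) be a 2-step nilpotent Lie algebra and μ: A × A → Z(A) a symmetric bilinear map taking values in the center of A such that μ([u,v], w) = 0 and μ(μ(u,v), w) = 0 for all u,v,w ∈ A. Then the product u•v := [u,v] + μ(u,v) makes A a 2-step nilpotent symmetric Leibniz algebra. -/
import Mathlib


/-- A 2-step nilpotent Lie algebra together with a center-valued symmetric bilinear
map μ with μ([u,v],w) = μ(μ(u,v),w) = 0 gives a 2-step nilpotent symmetric
Leibniz algebra via u•v = [u,v] + μ(u,v). -/
theorem lie_plus_mu_symmetric_leibniz
    {K A : Type*} [Field K] [AddCommGroup A] [Module K A]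
    (br μ : A →ₗ[K] A →ₗ[K] A)
    (hanti : ∀ u v : A, br u v = -(br v u))
    (hjac : ∀ u v w : A, br (br u v) w + br (br v w) u + br (br w u) v = 0)
    (hnil : ∀ u v w : A, br (br u v) w = 0)
    (hμsym : ∀ u v : A, μ u v = μ v u)
    (hcenter : ∀ u v w : A, br (μ u v) w = 0)
    (hμbr : ∀ u v w : A, μ (br u v) w = 0)
    (hμμ : ∀ u v w : A, μ (μ u v) w = 0)
    (bullet : A → A → A)
    (hbullet : ∀ u v : A, bullet u v = br u v + μ u v) :
    (∀ u v w : A, bullet u (bullet v w) = bullet (bullet u v) w + bullet v (bullet u w)) ∧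
    (∀ u v w : A, bullet u (bullet v w) = bullet (bullet u v) w - bullet (bullet u w) v) ∧
    (∀ u v w : A, bullet (bullet u v) w = 0 ∧ bullet u (bullet v w) = 0) := by
  have h1 : ∀ u v w : A, bullet (bullet u v) w = 0 := by
    intro u v w
    simp [hbullet, map_add, hnil, hμbr, hcenter, hμμ]
  have h2 : ∀ u v w : A, bullet u (bullet v w) = 0 := by
    intro u v w
    rw [hbullet, hbullet, map_add, map_add, hanti u (br v w), hanti u (μ v w), hnil,
      hcenter, hμsym u (br v w), hμbr, hμsym u (μ v w), hμμ]
    simp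
  refine ⟨fun u v w => ?_, fun u v w => ?_, fun u v w => ⟨h1 u v w, h2 u v w⟩⟩
  · rw [h2, h1, h2]; simp
  · rw [h2, h1, h1]; simp
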